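/- Let A be a finite set of positive integers with maximum d, and for n with S_n^{(A)} ≠ ∅ let σ_n be uniform on S_n^{(A)}. Fix l ∈ A and positive integers j. Then P(each of 1,…,j belongs to a cycle of σ_n of length l) = ∑_{π ∈ P(j)} [1/(n(n-1)⋯(n-j+1))] · [(|S_{n-l|π|}^{(A)}|/(n-l|π|)!)/(|S_n^{(A)}|/n!)] · ∏_{V∈π} (l-1)!/(l-|V|)!, where P(j) is the set of partitions of {1,…,j}, the product being taken as 0 for blocks V with |V| > l. -/

import Mathlib

open Finset
open scoped Classical
open Function Equiv



noncomputable def permCount (A : Set ℕ) (n : ℕ) : ℕ :=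
  Nat.card {σ : Equiv.Perm (Fin n) // ∀ x, Function.minimalPeriod ⇑σ x ∈ A}

-- iterate of a conjugated map
lemma permCongr_iterate {α β : Type*} (e : α ≃ β) (σ : Equiv.Perm α) (m : ℕ) (x : α) :
    (⇑(e.permCongr σ))^[m] (e x) = e ((⇑σ)^[m] x) := by
  induction m with
  | zero => simp
  | succ m ih => rw [Function.iterate_succ_apply', ih, Function.iterate_succ_apply']
                 simp [Equiv.permCongr_apply]

lemma minimalPeriod_permCongr {α β : Type*} (e : α ≃ β) (σ : Equiv.Perm α) (x : α) :
    Function.minimalPeriod (⇑(e.permCongr σ)) (e x) = Function.minimalPeriod (⇑σ) x := by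
  rw [Function.minimalPeriod_eq_minimalPeriod_iff]
  intro m
  constructor
  · intro h
    have := h
    unfold Function.IsPeriodicPt Function.IsFixedPt at this ⊢
    rw [permCongr_iterate] at this
    exact e.injective this
  · intro h
    unfold Function.IsPeriodicPt Function.IsFixedPt at h ⊢
    rw [permCongr_iterate, h]

-- invariance of permCount-like counts
lemma card_permA_congr {α β : Type*} [Fintype α] [Fintype β] (A : Set ℕ) (e : α ≃ β) :
    Nat.card {σ : Equiv.Perm α // ∀ x, Function.minimalPeriod ⇑σ x ∈ A}
      = Nat.card {σ : Equiv.Perm β // ∀ x, Function.minimalPeriod ⇑σ x ∈ A} := by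
  apply Nat.card_congr
  refine (e.permCongr).subtypeEquiv ?_
  intro σ
  constructor
  · intro h y
    have := minimalPeriod_permCongr e σ (e.symm y)
    rw [e.apply_symm_apply] at this
    rw [this]; exact h _
  · intro h x
    have := minimalPeriod_permCongr e σ x
    rw [← this]; exact h _

lemma card_permA_eq_permCount {α : Type*} [Fintype α] (A : Set ℕ) :
    Nat.card {σ : Equiv.Perm α // ∀ x, Function.minimalPeriod ⇑σ x ∈ A}
      = permCount A (Fintype.card α) := by
  rw [permCount]
  exact card_permA_congr A (Fintype.equivFin α)

-- rotation on Fin l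
open Fin.NatCast in
lemma addLeft_iterate (l : ℕ) [NeZero l] (m : ℕ) (i : Fin l) :
    (⇑(Equiv.addLeft (1 : Fin l)))^[m] i = (m : Fin l) + i := by
  induction m with
  | zero => simp
  | succ m ih =>
      rw [Function.iterate_succ_apply', ih]
      show 1 + ((m : Fin l) + i) = _
      push_cast
      rw [← add_assoc, add_comm (1 : Fin l)]

open Fin.NatCast in
lemma minimalPeriod_addLeft_one (l : ℕ) [NeZero l] (i : Fin l) :
    Function.minimalPeriod (⇑(Equiv.addLeft (1 : Fin l))) i = l := by
  have hl : l ≠ 0 := NeZero.ne l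
  have hper : Function.IsPeriodicPt (⇑(Equiv.addLeft (1 : Fin l))) l i := by
    unfold Function.IsPeriodicPt Function.IsFixedPt
    rw [addLeft_iterate]
    simp
  have h1 : Function.minimalPeriod (⇑(Equiv.addLeft (1 : Fin l))) i ∣ l :=
    hper.minimalPeriod_dvd
  have h2 : Function.IsPeriodicPt (⇑(Equiv.addLeft (1 : Fin l)))
      (Function.minimalPeriod (⇑(Equiv.addLeft (1 : Fin l))) i) i :=
    Function.isPeriodicPt_minimalPeriod _ _
  unfold Function.IsPeriodicPt Function.IsFixedPt at h2
  rw [addLeft_iterate] at h2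
  have h3 : ((Function.minimalPeriod (⇑(Equiv.addLeft (1 : Fin l))) i : ℕ) : Fin l) = 0 := by
    have := h2
    rwa [add_eq_right] at this
  have h4 : l ∣ Function.minimalPeriod (⇑(Equiv.addLeft (1 : Fin l))) i := by
    rwa [Fin.natCast_eq_zero] at h3
  exact Nat.dvd_antisymm h1 h4

open Fin.NatCast in
lemma addLeft_reaches (l : ℕ) [NeZero l] (i i' : Fin l) :
    ∃ m : ℕ, (⇑(Equiv.addLeft (1 : Fin l)))^[m] i = i' := by
  refine ⟨(i' - i).val, ?_⟩
  rw [addLeft_iterate, Fin.cast_val_eq_self, sub_add_cancel]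

-- sumCongr iterates
lemma sumCongr_iterate_inl {α β : Type*} (σ : Equiv.Perm α) (τ : Equiv.Perm β) (m : ℕ) (a : α) :
    (⇑(Equiv.sumCongr σ τ))^[m] (Sum.inl a) = Sum.inl ((⇑σ)^[m] a) := by
  induction m with
  | zero => rfl
  | succ m ih => rw [Function.iterate_succ_apply', ih, Function.iterate_succ_apply']; rfl

lemma sumCongr_iterate_inr {α β : Type*} (σ : Equiv.Perm α) (τ : Equiv.Perm β) (m : ℕ) (b : β) :
    (⇑(Equiv.sumCongr σ τ))^[m] (Sum.inr b) = Sum.inr ((⇑τ)^[m] b) := by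
  induction m with
  | zero => rfl
  | succ m ih => rw [Function.iterate_succ_apply', ih, Function.iterate_succ_apply']; rfl

lemma minimalPeriod_sumCongr_inl {α β : Type*} (σ : Equiv.Perm α) (τ : Equiv.Perm β) (a : α) :
    Function.minimalPeriod (⇑(Equiv.sumCongr σ τ)) (Sum.inl a)
      = Function.minimalPeriod (⇑σ) a := by
  rw [Function.minimalPeriod_eq_minimalPeriod_iff]
  intro m
  unfold Function.IsPeriodicPt Function.IsFixedPt
  rw [sumCongr_iterate_inl]
  constructor
  · intro h; exact Sum.inl.inj h
  · intro h; rw [h]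

lemma minimalPeriod_sumCongr_inr {α β : Type*} (σ : Equiv.Perm α) (τ : Equiv.Perm β) (b : β) :
    Function.minimalPeriod (⇑(Equiv.sumCongr σ τ)) (Sum.inr b)
      = Function.minimalPeriod (⇑τ) b := by
  rw [Function.minimalPeriod_eq_minimalPeriod_iff]
  intro m
  unfold Function.IsPeriodicPt Function.IsFixedPt
  rw [sumCongr_iterate_inr]
  constructor
  · intro h; exact Sum.inr.inj h
  · intro h; rw [h]

-- prodCongr with refl on left
lemma prodCongr_refl_iterate {α β : Type*} (τ : Equiv.Perm β) (m : ℕ) (p : α × β) :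
    (⇑(Equiv.prodCongr (Equiv.refl α) τ))^[m] p = (p.1, (⇑τ)^[m] p.2) := by
  induction m with
  | zero => rfl
  | succ m ih => rw [Function.iterate_succ_apply', ih, Function.iterate_succ_apply']; rfl

lemma minimalPeriod_prodCongr_refl {α β : Type*} (τ : Equiv.Perm β) (p : α × β) :
    Function.minimalPeriod (⇑(Equiv.prodCongr (Equiv.refl α) τ)) p
      = Function.minimalPeriod (⇑τ) p.2 := by
  rw [Function.minimalPeriod_eq_minimalPeriod_iff]
  intro m
  unfold Function.IsPeriodicPt Function.IsFixedPt
  rw [prodCongr_refl_iterate]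
  constructor
  · intro h; exact congrArg Prod.snd h
  · intro h; rw [Prod.ext_iff]; exact ⟨rfl, h⟩

lemma sameCycle_iff_exists_nat {α : Type*} [Finite α] (f : Equiv.Perm α) (x y : α) :
    f.SameCycle x y ↔ ∃ i : ℕ, (⇑f)^[i] x = y := by
  constructor
  · intro h
    obtain ⟨i, _, hi⟩ := h.exists_pow_eq'
    exact ⟨i, hi⟩
  · rintro ⟨i, hi⟩
    exact ⟨(i : ℤ), by rwa [zpow_natCast] at *⟩

section Partition

variable {j : ℕ} (π : Finset (Finset (Fin j)))

def IsPart : Prop := (∀ V ∈ π, V.Nonempty) ∧ ∀ x : Fin j, ∃! V, V ∈ π ∧ x ∈ V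

noncomputable def blkOf (h : IsPart π) (x : Fin j) : Finset (Fin j) :=
  π.choose (x ∈ ·) (h.2 x)

lemma blkOf_mem (h : IsPart π) (x : Fin j) : blkOf π h x ∈ π := Finset.choose_mem _ _ _

lemma mem_blkOf (h : IsPart π) (x : Fin j) : x ∈ blkOf π h x :=
  Finset.choose_property (x ∈ ·) π (h.2 x)

lemma blkOf_eq (h : IsPart π) {V : Finset (Fin j)} {x : Fin j} (hV : V ∈ π) (hx : x ∈ V) :
    blkOf π h x = V := by
  obtain ⟨W, _, hW⟩ := h.2 x
  rw [hW V ⟨hV, hx⟩, hW (blkOf π h x) ⟨blkOf_mem π h x, mem_blkOf π h x⟩]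

end Partition

section Qdef

variable {j n : ℕ} (ι : Fin j → Fin n) (hι : Function.Injective ι)

noncomputable def qcl (σ : Equiv.Perm (Fin n)) (x : Fin j) : Finset (Fin j) :=
  Finset.univ.filter (fun y => σ.SameCycle (ι x) (ι y))

lemma mem_qcl_iff {σ : Equiv.Perm (Fin n)} {x y : Fin j} :
    y ∈ qcl ι σ x ↔ σ.SameCycle (ι x) (ι y) := by simp [qcl]

lemma self_mem_qcl (σ : Equiv.Perm (Fin n)) (x : Fin j) : x ∈ qcl ι σ x := by
  rw [mem_qcl_iff]

lemma qcl_eq_of_sameCycle {σ : Equiv.Perm (Fin n)} {x y : Fin j}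
    (h : σ.SameCycle (ι x) (ι y)) : qcl ι σ x = qcl ι σ y := by
  ext z
  rw [mem_qcl_iff, mem_qcl_iff]
  exact ⟨fun hz => h.symm.trans hz, fun hz => h.trans hz⟩

lemma isPart_image_qcl (σ : Equiv.Perm (Fin n)) :
    IsPart (Finset.univ.image (qcl ι σ)) := by
  constructor
  · intro V hV
    simp only [Finset.mem_image, Finset.mem_univ, true_and] at hV
    obtain ⟨x, rfl⟩ := hV
    exact ⟨x, self_mem_qcl ι σ x⟩
  · intro x
    refine ⟨qcl ι σ x, ⟨Finset.mem_image_of_mem _ (Finset.mem_univ x), self_mem_qcl ι σ x⟩, ?_⟩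
    rintro V ⟨hV, hxV⟩
    simp only [Finset.mem_image, Finset.mem_univ, true_and] at hV
    obtain ⟨y, rfl⟩ := hV
    rw [mem_qcl_iff] at hxV
    exact qcl_eq_of_sameCycle ι hxV

lemma image_qcl_eq_iff (σ : Equiv.Perm (Fin n)) (π : Finset (Finset (Fin j)))
    (hπ : IsPart π) :
    Finset.univ.image (qcl ι σ) = π ↔ ∀ x, qcl ι σ x = blkOf π hπ x := by
  constructor
  · intro h x
    have h1 : qcl ι σ x ∈ π := by
      rw [← h]; exact Finset.mem_image_of_mem _ (Finset.mem_univ x)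
    exact (blkOf_eq π hπ h1 (self_mem_qcl ι σ x)).symm
  · intro h
    ext V
    simp only [Finset.mem_image, Finset.mem_univ, true_and]
    constructor
    · rintro ⟨x, rfl⟩
      rw [h x]; exact blkOf_mem π hπ x
    · intro hV
      obtain ⟨x, hx⟩ := hπ.1 V hV
      exact ⟨x, by rw [h x, blkOf_eq π hπ hV hx]⟩

end Qdef
section Code

variable (l : ℕ) {j n : ℕ} [NeZero l]
variable (π : Finset (Finset (Fin j)))

noncomputable def minB (hπ : IsPart π) (V : ↥π) : Fin j := V.1.min' (hπ.1 V.1 V.2)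

lemma minB_mem (hπ : IsPart π) (V : ↥π) : minB π hπ V ∈ V.1 := Finset.min'_mem _ _

variable (hπ : IsPart π) (hjn : j ≤ n)

def CodeP (F : ↥π → Fin l → Fin n) : Prop :=
  Function.Injective (fun p : ↥π × Fin l => F p.1 p.2) ∧
  (∀ V, F V 0 = Fin.castLE hjn (minB π hπ V)) ∧
  (∀ V i x, F V i = Fin.castLE hjn x → x ∈ V.1) ∧
  (∀ V (x : Fin j), x ∈ V.1 → ∃ i, F V i = Fin.castLE hjn x)

def Code := {F : ↥π → Fin l → Fin n // CodeP l π hπ hjn F}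

noncomputable instance : Fintype (Code l π hπ hjn) := by unfold Code; infer_instance

def Bmem (c : Code l π hπ hjn) (y : Fin n) : Prop := ∃ p : ↥π × Fin l, c.1 p.1 p.2 = y

noncomputable def e1 (c : Code l π hπ hjn) : (↥π × Fin l) ≃ {y : Fin n // Bmem l π hπ hjn c y} :=
  Equiv.ofBijective (fun p => ⟨c.1 p.1 p.2, p, rfl⟩)
    ⟨fun p p' h => c.2.1 (Subtype.ext_iff.mp h),
     by rintro ⟨y, p, hp⟩; exact ⟨p, Subtype.ext hp⟩⟩

noncomputable def eqvc (c : Code l π hπ hjn) :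
    ((↥π × Fin l) ⊕ {y : Fin n // ¬ Bmem l π hπ hjn c y}) ≃ Fin n :=
  (Equiv.sumCongr (e1 l π hπ hjn c) (Equiv.refl _)).trans (Equiv.sumCompl _)

lemma eqvc_inl (c : Code l π hπ hjn) (p : ↥π × Fin l) :
    eqvc l π hπ hjn c (Sum.inl p) = c.1 p.1 p.2 := rfl

lemma eqvc_inr (c : Code l π hπ hjn) (y : {y : Fin n // ¬ Bmem l π hπ hjn c y}) :
    eqvc l π hπ hjn c (Sum.inr y) = y.1 := rfl

noncomputable def rho : Equiv.Perm (↥π × Fin l) :=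
  Equiv.prodCongr (Equiv.refl _) (Equiv.addLeft 1)

noncomputable def fwd (c : Code l π hπ hjn) (τ : Equiv.Perm {y : Fin n // ¬ Bmem l π hπ hjn c y}) :
    Equiv.Perm (Fin n) :=
  (eqvc l π hπ hjn c).permCongr (Equiv.sumCongr (rho l π) τ)

lemma fwd_apply_block (c : Code l π hπ hjn) (τ) (V : ↥π) (i : Fin l) :
    fwd l π hπ hjn c τ (c.1 V i) = c.1 V (1 + i) := by
  have h := congrArg (fwd l π hπ hjn c τ) (eqvc_inl l π hπ hjn c (V, i))
  rw [← h]
  show (eqvc l π hπ hjn c).permCongr (Equiv.sumCongr (rho l π) τ) (eqvc l π hπ hjn c (Sum.inl (V, i)))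
      = _
  rw [Equiv.permCongr_apply, Equiv.symm_apply_apply]
  show eqvc l π hπ hjn c (Sum.inl (rho l π (V, i))) = _
  rw [eqvc_inl]
  rfl

lemma fwd_apply_out (c : Code l π hπ hjn) (τ) (y : {y : Fin n // ¬ Bmem l π hπ hjn c y}) :
    fwd l π hπ hjn c τ y.1 = (τ y).1 := by
  have h := congrArg (fwd l π hπ hjn c τ) (eqvc_inr l π hπ hjn c y)
  rw [← h]
  show (eqvc l π hπ hjn c).permCongr (Equiv.sumCongr (rho l π) τ) (eqvc l π hπ hjn c (Sum.inr y)) = _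
  rw [Equiv.permCongr_apply, Equiv.symm_apply_apply]
  show eqvc l π hπ hjn c (Sum.inr (τ y)) = _
  rw [eqvc_inr]

lemma fwd_minimalPeriod_block (c : Code l π hπ hjn) (τ) (V : ↥π) (i : Fin l) :
    Function.minimalPeriod (⇑(fwd l π hπ hjn c τ)) (c.1 V i) = l := by
  have h1 : c.1 V i = eqvc l π hπ hjn c (Sum.inl (V, i)) := (eqvc_inl l π hπ hjn c (V, i)).symm
  rw [h1, fwd, minimalPeriod_permCongr]
  rw [minimalPeriod_sumCongr_inl]
  show Function.minimalPeriod (⇑(Equiv.prodCongr (Equiv.refl _) (Equiv.addLeft 1))) (V, i) = l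
  rw [minimalPeriod_prodCongr_refl]
  exact minimalPeriod_addLeft_one l i

lemma fwd_minimalPeriod_out (c : Code l π hπ hjn) (τ) (y : {y : Fin n // ¬ Bmem l π hπ hjn c y}) :
    Function.minimalPeriod (⇑(fwd l π hπ hjn c τ)) y.1
      = Function.minimalPeriod (⇑τ) y := by
  have h1 : y.1 = eqvc l π hπ hjn c (Sum.inr y) := (eqvc_inr l π hπ hjn c y).symm
  rw [h1, fwd, minimalPeriod_permCongr, minimalPeriod_sumCongr_inr]

lemma fwd_sameCycle_block (c : Code l π hπ hjn) (τ) (V V' : ↥π) (i i' : Fin l) :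
    (fwd l π hπ hjn c τ).SameCycle (c.1 V i) (c.1 V' i') ↔ V = V' := by
  rw [sameCycle_iff_exists_nat]
  have h1 : c.1 V i = eqvc l π hπ hjn c (Sum.inl (V, i)) := (eqvc_inl l π hπ hjn c (V, i)).symm
  have h2 : c.1 V' i' = eqvc l π hπ hjn c (Sum.inl (V', i')) := (eqvc_inl l π hπ hjn c (V', i')).symm
  rw [h1, h2]
  constructor
  · rintro ⟨m, hm⟩
    rw [fwd, permCongr_iterate] at hm
    have := (eqvc l π hπ hjn c).injective hm
    rw [sumCongr_iterate_inl] at this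
    have := Sum.inl.inj this
    have h3 : ((⇑(rho l π))^[m] (V, i)).1 = V' := by rw [this]
    rw [rho, prodCongr_refl_iterate] at h3
    exact h3
  · rintro rfl
    obtain ⟨m, hm⟩ := addLeft_reaches l i i'
    refine ⟨m, ?_⟩
    rw [fwd, permCongr_iterate]
    congr 1
    rw [sumCongr_iterate_inl]
    congr 1
    show (⇑(Equiv.prodCongr (Equiv.refl _) (Equiv.addLeft 1)))^[m] (V, i) = (V, i')
    rw [prodCongr_refl_iterate, hm]

end Code
lemma subtypePerm_iterate {α : Type*} {p : α → Prop} (σ : Equiv.Perm α)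
    (h : ∀ x, p x ↔ p (σ x)) (m : ℕ) (z : {x // p x}) :
    ((⇑(σ.subtypePerm (fun x => (h x).symm)))^[m] z).1 = (⇑σ)^[m] z.1 := by
  induction m with
  | zero => rfl
  | succ m ih =>
      rw [Function.iterate_succ_apply', Function.iterate_succ_apply', ← ih]
      rfl

lemma minimalPeriod_subtypePerm {α : Type*} {p : α → Prop} (σ : Equiv.Perm α)
    (h : ∀ x, p x ↔ p (σ x)) (z : {x // p x}) :
    Function.minimalPeriod (⇑(σ.subtypePerm (fun x => (h x).symm))) z = Function.minimalPeriod (⇑σ) z.1 := by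
  rw [Function.minimalPeriod_eq_minimalPeriod_iff]
  intro m
  unfold Function.IsPeriodicPt Function.IsFixedPt
  rw [Subtype.ext_iff, subtypePerm_iterate σ h]

section Big

variable (A : Finset ℕ) (l : ℕ) {j n : ℕ} [NeZero l]
variable (π : Finset (Finset (Fin j))) (hπ : IsPart π) (hjn : j ≤ n)

def Pfull (σ : Equiv.Perm (Fin n)) : Prop :=
  (∀ x, Function.minimalPeriod ⇑σ x ∈ (A : Set ℕ)) ∧
  (∀ x : Fin j, Function.minimalPeriod ⇑σ (Fin.castLE hjn x) = l) ∧
  (∀ x : Fin j, qcl (Fin.castLE hjn) σ x = blkOf π hπ x)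

lemma pfull_fwd (hlA : l ∈ (A : Set ℕ)) (c : Code l π hπ hjn) (τ : Equiv.Perm {y : Fin n // ¬ Bmem l π hπ hjn c y})
    (hτ : ∀ z, Function.minimalPeriod ⇑τ z ∈ (A : Set ℕ)) :
    Pfull A l π hπ hjn (fwd l π hπ hjn c τ) := by
  refine ⟨?_, ?_, ?_⟩
  · intro y
    by_cases hB : Bmem l π hπ hjn c y
    · obtain ⟨p, hp⟩ := hB
      rw [← hp, fwd_minimalPeriod_block]
      exact hlA
    · have := fwd_minimalPeriod_out l π hπ hjn c τ ⟨y, hB⟩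
      rw [this]
      exact hτ _
  · intro x
    have hx : x ∈ blkOf π hπ x := mem_blkOf π hπ x
    obtain ⟨i, hi⟩ := c.2.2.2.2 ⟨blkOf π hπ x, blkOf_mem π hπ x⟩ x hx
    rw [← hi, fwd_minimalPeriod_block]
  · intro x
    ext y
    rw [mem_qcl_iff]
    have hx : x ∈ blkOf π hπ x := mem_blkOf π hπ x
    have hy : y ∈ blkOf π hπ y := mem_blkOf π hπ y
    obtain ⟨ix, hix⟩ := c.2.2.2.2 ⟨blkOf π hπ x, blkOf_mem π hπ x⟩ x hx
    obtain ⟨iy, hiy⟩ := c.2.2.2.2 ⟨blkOf π hπ y, blkOf_mem π hπ y⟩ y hy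
    rw [← hix, ← hiy, fwd_sameCycle_block]
    constructor
    · intro h
      have h' : blkOf π hπ x = blkOf π hπ y := congrArg Subtype.val h
      rw [h']; exact hy
    · intro h
      have h' : blkOf π hπ y = blkOf π hπ x :=
        blkOf_eq π hπ (blkOf_mem π hπ x) h
      exact Subtype.ext h'.symm

lemma code_eval (c : Code l π hπ hjn) (τ) (V : ↥π) (m : ℕ) (hm : m < l) :
    c.1 V ⟨m, hm⟩ = (⇑(fwd l π hπ hjn c τ))^[m] (Fin.castLE hjn (minB π hπ V)) := by
  induction m with
  | zero =>
      have h0 : (⟨0, hm⟩ : Fin l) = 0 := by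
        apply Fin.ext; simp
      rw [h0, Function.iterate_zero_apply]
      exact c.2.2.1 V
  | succ m ih =>
      have hm' : m < l := Nat.lt_of_succ_lt hm
      rw [Function.iterate_succ_apply', ← ih hm', fwd_apply_block]
      have h2 : (⟨m + 1, hm⟩ : Fin l) = 1 + ⟨m, hm'⟩ := by
        apply Fin.ext
        rw [Fin.val_add, Fin.val_one']
        show m + 1 = (1 % l + m) % l
        rw [Nat.mod_add_mod, Nat.mod_eq_of_lt (by omega)]
        omega
      rw [h2]

end Big
section Big2

variable (A : Finset ℕ) (l : ℕ) {j n : ℕ} [NeZero l]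
variable (π : Finset (Finset (Fin j))) (hπ : IsPart π) (hjn : j ≤ n)

noncomputable def gmap (hlA : l ∈ (A : Set ℕ)) :
    (Σ c : Code l π hπ hjn,
      {τ : Equiv.Perm {y : Fin n // ¬ Bmem l π hπ hjn c y} //
        ∀ z, Function.minimalPeriod ⇑τ z ∈ (A : Set ℕ)}) →
      {σ : Equiv.Perm (Fin n) // Pfull A l π hπ hjn σ} :=
  fun s => ⟨fwd l π hπ hjn s.1 s.2.1, pfull_fwd A l π hπ hjn hlA s.1 s.2.1 s.2.2⟩

lemma gmap_injective (hlA : l ∈ (A : Set ℕ)) :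
    Function.Injective (gmap A l π hπ hjn hlA) := by
  rintro ⟨c, τ, hτ⟩ ⟨c', τ', hτ'⟩ h
  have hσ : fwd l π hπ hjn c τ = fwd l π hπ hjn c' τ' := congrArg Subtype.val h
  have hc : c = c' := by
    apply Subtype.ext; funext V i
    have e1 := code_eval l π hπ hjn c τ V i.val i.isLt
    have e2 := code_eval l π hπ hjn c' τ' V i.val i.isLt
    rw [Fin.eta] at e1 e2
    rw [e1, e2, hσ]
  subst hc
  have hτeq : τ = τ' := by
    apply Equiv.ext; intro y
    apply Subtype.ext
    have h1 := fwd_apply_out l π hπ hjn c τ y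
    have h2 := fwd_apply_out l π hπ hjn c τ' y
    rw [← h1, ← h2, hσ]
  subst hτeq
  rfl

lemma gmap_surjective (hlA : l ∈ (A : Set ℕ)) :
    Function.Surjective (gmap A l π hπ hjn hlA) := by
  rintro ⟨σ, hA, hL, hQ⟩
  have hl0 : 0 < l := Nat.pos_of_ne_zero (NeZero.ne l)
  set ι : Fin j → Fin n := Fin.castLE hjn with hidef
  set F : ↥π → Fin l → Fin n := fun V i => (⇑σ)^[i.val] (ι (minB π hπ V)) with hF
  have hsc : ∀ (V : ↥π) (i : Fin l), σ.SameCycle (ι (minB π hπ V)) (F V i) := by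
    intro V i; rw [sameCycle_iff_exists_nat]; exact ⟨i.val, rfl⟩
  have hqmin : ∀ V : ↥π, qcl ι σ (minB π hπ V) = V.1 := by
    intro V
    rw [hQ (minB π hπ V)]
    exact blkOf_eq π hπ V.2 (minB_mem π hπ V)
  have hcover : ∀ V i x, F V i = ι x → x ∈ V.1 := by
    intro V i x hx
    have h1 : σ.SameCycle (ι (minB π hπ V)) (ι x) := by rw [← hx]; exact hsc V i
    have h2 := qcl_eq_of_sameCycle ι h1
    have h3 : x ∈ qcl ι σ x := self_mem_qcl ι σ x
    rw [← h2, hqmin] at h3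
    exact h3
  have hmem : ∀ (V : ↥π) x, x ∈ V.1 → ∃ i, F V i = ι x := by
    intro V x hx
    have h1 : minB π hπ V ∈ qcl ι σ x := by
      rw [hQ x, blkOf_eq π hπ V.2 hx]; exact minB_mem π hπ V
    rw [mem_qcl_iff] at h1
    have h2 := h1.symm
    rw [sameCycle_iff_exists_nat] at h2
    obtain ⟨m, hm⟩ := h2
    refine ⟨⟨m % l, Nat.mod_lt m hl0⟩, ?_⟩
    show (⇑σ)^[m % l] (ι (minB π hπ V)) = ι x
    have h4 := Function.iterate_mod_minimalPeriod_eq (f := ⇑σ) (x := ι (minB π hπ V)) (n := m)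
    rw [hL (minB π hπ V)] at h4
    rw [h4, hm]
  have hinj : Function.Injective (fun p : ↥π × Fin l => F p.1 p.2) := by
    rintro ⟨V, i⟩ ⟨V', i'⟩ hpp0
    have hpp : F V i = F V' i' := hpp0
    have h1 := hsc V i
    rw [hpp] at h1
    have h3 : σ.SameCycle (ι (minB π hπ V)) (ι (minB π hπ V')) := h1.trans (hsc V' i').symm
    have h4 := qcl_eq_of_sameCycle ι h3
    rw [hqmin, hqmin] at h4
    have hVV : V = V' := Subtype.ext h4
    subst hVV
    have hlt : i.val < Function.minimalPeriod ⇑σ (ι (minB π hπ V)) := by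
      rw [hL]; exact i.isLt
    have hlt' : i'.val < Function.minimalPeriod ⇑σ (ι (minB π hπ V)) := by
      rw [hL]; exact i'.isLt
    have h5 : i.val = i'.val :=
      (Function.iterate_eq_iterate_iff_of_lt_minimalPeriod hlt hlt').mp hpp
    exact Prod.ext rfl (Fin.ext h5)
  have hzero : ∀ V : ↥π, F V 0 = ι (minB π hπ V) := by
    intro V
    show (⇑σ)^[(0 : Fin l).val] (ι (minB π hπ V)) = ι (minB π hπ V)
    simp
  set c : Code l π hπ hjn := ⟨F, hinj, hzero, hcover, hmem⟩ with hc
  have hBiff : ∀ y, Bmem l π hπ hjn c y ↔ Bmem l π hπ hjn c (σ y) := by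
    intro y
    constructor
    · rintro ⟨⟨V, i⟩, hp⟩
      have hp' : F V i = y := hp
      refine ⟨⟨V, ⟨(i.val + 1) % l, Nat.mod_lt _ hl0⟩⟩, ?_⟩
      show (⇑σ)^[(i.val + 1) % l] (ι (minB π hπ V)) = σ y
      have h4 := Function.iterate_mod_minimalPeriod_eq (f := ⇑σ) (x := ι (minB π hπ V))
        (n := i.val + 1)
      rw [hL] at h4
      rw [h4, Function.iterate_succ_apply', ← hp']
    · rintro ⟨⟨V, i⟩, hp⟩
      have hp' : F V i = σ y := hp
      refine ⟨⟨V, ⟨(i.val + (l - 1)) % l, Nat.mod_lt _ hl0⟩⟩, ?_⟩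
      show (⇑σ)^[(i.val + (l - 1)) % l] (ι (minB π hπ V)) = y
      apply σ.injective
      have h4 := Function.iterate_mod_minimalPeriod_eq (f := ⇑σ) (x := ι (minB π hπ V))
        (n := i.val + (l - 1))
      rw [hL] at h4
      rw [h4, ← Function.iterate_succ_apply' (⇑σ) (i.val + (l - 1)) (Fin.castLE hjn (minB π hπ V)), ← hp']
      have h5 : (i.val + (l - 1)).succ = i.val + l := by omega
      rw [h5]
      show (⇑σ)^[i.val + l] (ι (minB π hπ V)) = F V i
      rw [Function.iterate_add_apply]
      have h6 := Function.iterate_minimalPeriod (f := ⇑σ) (x := ι (minB π hπ V))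
      rw [hL] at h6
      rw [h6]
  have hinv : ∀ y, (¬ Bmem l π hπ hjn c y) ↔ ¬ Bmem l π hπ hjn c (σ y) :=
    fun y => not_congr (hBiff y)
  refine ⟨⟨c, ⟨σ.subtypePerm (fun y => (hinv y).symm), ?_⟩⟩, ?_⟩
  · intro z
    rw [minimalPeriod_subtypePerm σ hinv]
    exact hA _
  · apply Subtype.ext
    show fwd l π hπ hjn c (σ.subtypePerm (fun y => (hinv y).symm)) = σ
    apply Equiv.ext
    intro y
    by_cases hB : Bmem l π hπ hjn c y
    · obtain ⟨⟨V, i⟩, hp⟩ := hB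
      have hp' : c.1 V i = y := hp
      rw [← hp', fwd_apply_block]
      show (⇑σ)^[((1 : Fin l) + i).val] (ι (minB π hπ V)) = σ (F V i)
      have h4 := Function.iterate_mod_minimalPeriod_eq (f := ⇑σ) (x := ι (minB π hπ V))
        (n := 1 + i.val)
      rw [hL] at h4
      have h5 : ((1 : Fin l) + i).val = (1 + i.val) % l := by
        rw [Fin.val_add, Fin.val_one', Nat.mod_add_mod]
      rw [h5, h4, Nat.add_comm 1 i.val, Function.iterate_succ_apply']
    · have hout := fwd_apply_out l π hπ hjn c (σ.subtypePerm (fun y => (hinv y).symm)) ⟨y, hB⟩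
      rw [hout]
      rfl

lemma card_Pfull (hlA : l ∈ (A : Set ℕ)) :
    Nat.card {σ : Equiv.Perm (Fin n) // Pfull A l π hπ hjn σ}
      = Fintype.card (Code l π hπ hjn) * permCount ↑A (n - l * π.card) := by
  have hbij : Function.Bijective (gmap A l π hπ hjn hlA) :=
    ⟨gmap_injective A l π hπ hjn hlA, gmap_surjective A l π hπ hjn hlA⟩
  have h1 := Nat.card_congr (Equiv.ofBijective _ hbij)
  rw [← h1]
  rw [Nat.card_eq_fintype_card, Fintype.card_sigma]
  have h2 : ∀ c : Code l π hπ hjn,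
      Fintype.card {τ : Equiv.Perm {y : Fin n // ¬ Bmem l π hπ hjn c y} //
        ∀ z, Function.minimalPeriod ⇑τ z ∈ (A : Set ℕ)} = permCount ↑A (n - l * π.card) := by
    intro c
    rw [← Nat.card_eq_fintype_card, card_permA_eq_permCount]
    congr 1
    rw [Fintype.card_subtype_compl]
    have h3 : Fintype.card {y : Fin n // Bmem l π hπ hjn c y}
        = π.card * l := by
      rw [← Fintype.card_congr (e1 l π hπ hjn c)]
      simp [Fintype.card_coe]
    rw [h3, Fintype.card_fin, Nat.mul_comm]
  rw [Finset.sum_congr rfl (fun c _ => h2 c), Finset.sum_const, Finset.card_univ, smul_eq_mul]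

end Big2
section CountCode

variable (l : ℕ) {j n : ℕ} [NeZero l]
variable (π : Finset (Finset (Fin j))) (hπ : IsPart π) (hjn : j ≤ n)

/-- the min of the block of `x` -/
noncomputable def bmin (x : Fin j) : Fin j :=
  minB π hπ ⟨blkOf π hπ x, blkOf_mem π hπ x⟩

def GtypeP (G : Fin j → Fin l) : Prop :=
  (∀ x y, blkOf π hπ x = blkOf π hπ y → G x = G y → x = y) ∧
  (∀ x, G x = 0 ↔ x = bmin π hπ x)

def Gtype := {G : Fin j → Fin l // GtypeP l π hπ G}

noncomputable instance : Fintype (Gtype l π hπ) := by unfold Gtype; infer_instance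

def FreeSlot (G : Fin j → Fin l) (p : ↥π × Fin l) : Prop := ¬ ∃ x ∈ p.1.1, G x = p.2

/-- per-block data -/
def BD (V : ↥π) := {g : {x // x ∈ V.1} → Fin l //
  Function.Injective g ∧ ∀ x, g x = 0 ↔ x.1 = minB π hπ V}

noncomputable instance (V : ↥π) : Fintype (BD l π hπ V) := by unfold BD; infer_instance

/-- block data to embedding count -/
noncomputable def bwdBD (V : ↥π)
    (e : {x : {x // x ∈ V.1} // x.1 ≠ minB π hπ V} ↪ {i : Fin l // i ≠ 0}) :
    BD l π hπ V := by
  refine ⟨fun x => if h : x.1 = minB π hπ V then 0 else (e ⟨x, h⟩).1, ?_, ?_⟩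
  · intro x y hxy
    by_cases hx : x.1 = minB π hπ V <;> by_cases hy : y.1 = minB π hπ V <;>
      simp only [hx, hy, dif_pos, dif_neg, not_false_iff] at hxy
    · exact Subtype.ext (hx.trans hy.symm)
    · exact absurd hxy.symm (e ⟨y, hy⟩).2
    · exact absurd hxy (e ⟨x, hx⟩).2
    · have := e.injective (Subtype.ext hxy)
      exact congrArg Subtype.val this
  · intro x
    by_cases hx : x.1 = minB π hπ V
    · simp [hx]
    · simp only [hx, dif_neg, not_false_iff, iff_false]
      exact (e ⟨x, hx⟩).2

lemma bwdBD_bijective (V : ↥π) : Function.Bijective (bwdBD l π hπ V) := by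
  constructor
  · intro e e' h
    apply DFunLike.ext
    intro x
    apply Subtype.ext
    have h1 := congrArg (fun g : BD l π hπ V => g.1 x.1) h
    simp only [bwdBD, dif_neg x.2] at h1
    exact h1
  · rintro ⟨g, hinj, hiff⟩
    refine ⟨⟨fun x => ⟨g x.1, fun h0 => x.2 ((hiff x.1).mp h0)⟩, ?_⟩, ?_⟩
    · intro x y hxy
      exact Subtype.ext (hinj (congrArg Subtype.val hxy))
    · apply Subtype.ext
      funext x
      by_cases hx : x.1 = minB π hπ V
      · simp only [bwdBD, dif_pos hx]
        exact ((hiff x).mpr hx).symm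
      · simp only [bwdBD, dif_neg hx]
        rfl

lemma card_BD (V : ↥π) :
    Fintype.card (BD l π hπ V) = (l - 1).descFactorial (V.1.card - 1) := by
  rw [← Fintype.card_congr (Equiv.ofBijective _ (bwdBD_bijective l π hπ V))]
  rw [Fintype.card_embedding_eq]
  congr 1
  · have h1 : Fintype.card {i : Fin l // i ≠ 0} =
        Fintype.card (Fin l) - Fintype.card {i : Fin l // i = 0} :=
      Fintype.card_subtype_compl _
    rw [h1, Fintype.card_subtype_eq, Fintype.card_fin]
  · have h1 : Fintype.card {x : {x // x ∈ V.1} // x.1 ≠ minB π hπ V} =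
        Fintype.card {x // x ∈ V.1} - Fintype.card {x : {x // x ∈ V.1} // x.1 = minB π hπ V} :=
      Fintype.card_subtype_compl _
    rw [h1, Fintype.card_coe]
    congr 1
    rw [Fintype.card_congr (Equiv.subtypeEquivRight (q := fun x : {x // x ∈ V.1} =>
      x = ⟨minB π hπ V, minB_mem π hπ V⟩)
      (fun x => ⟨fun h => Subtype.ext h, fun h => congrArg Subtype.val h⟩))]
    exact Fintype.card_subtype_eq _

lemma gs_eval (gs : ∀ V : ↥π, BD l π hπ V) (V : ↥π) (z : Fin j) (hz : z ∈ V.1) :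
    (gs ⟨blkOf π hπ z, blkOf_mem π hπ z⟩).1 ⟨z, mem_blkOf π hπ z⟩ = (gs V).1 ⟨z, hz⟩ := by
  obtain ⟨Vs, hV⟩ := V
  have hb : blkOf π hπ z = Vs := blkOf_eq π hπ hV hz
  subst hb
  rfl

noncomputable def bwdG (gs : ∀ V : ↥π, BD l π hπ V) : Gtype l π hπ := by
  refine ⟨fun x => (gs ⟨blkOf π hπ x, blkOf_mem π hπ x⟩).1 ⟨x, mem_blkOf π hπ x⟩, ?_, ?_⟩
  · intro x y hbl hxy
    have hy' : y ∈ blkOf π hπ x := by rw [hbl]; exact mem_blkOf π hπ y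
    have hxy' : (gs ⟨blkOf π hπ x, blkOf_mem π hπ x⟩).1 ⟨x, mem_blkOf π hπ x⟩
        = (gs ⟨blkOf π hπ y, blkOf_mem π hπ y⟩).1 ⟨y, mem_blkOf π hπ y⟩ := hxy
    rw [gs_eval l π hπ gs ⟨blkOf π hπ x, blkOf_mem π hπ x⟩ y hy'] at hxy'
    have := (gs ⟨blkOf π hπ x, blkOf_mem π hπ x⟩).2.1 hxy'
    exact congrArg Subtype.val this
  · intro x
    exact (gs ⟨blkOf π hπ x, blkOf_mem π hπ x⟩).2.2 ⟨x, mem_blkOf π hπ x⟩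

lemma bwdG_bijective : Function.Bijective (bwdG l π hπ) := by
  constructor
  · intro gs gs' h
    funext V
    apply Subtype.ext
    funext x
    have h1 : (gs ⟨blkOf π hπ x.1, blkOf_mem π hπ x.1⟩).1 ⟨x.1, mem_blkOf π hπ x.1⟩
        = (gs' ⟨blkOf π hπ x.1, blkOf_mem π hπ x.1⟩).1 ⟨x.1, mem_blkOf π hπ x.1⟩ :=
      congrArg (fun G : Gtype l π hπ => G.1 x.1) h
    rw [gs_eval l π hπ gs V x.1 x.2, gs_eval l π hπ gs' V x.1 x.2] at h1
    have hx : (⟨x.1, x.2⟩ : {y // y ∈ V.1}) = x := rfl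
    rw [hx] at h1
    exact h1
  · rintro ⟨G, hGinj, hGiff⟩
    refine ⟨fun V => ⟨fun x => G x.1, ?_, ?_⟩, ?_⟩
    · intro x y hxy
      have hb : blkOf π hπ x.1 = blkOf π hπ y.1 := by
        rw [blkOf_eq π hπ V.2 x.2, blkOf_eq π hπ V.2 y.2]
      exact Subtype.ext (hGinj x.1 y.1 hb hxy)
    · intro x
      have hb : bmin π hπ x.1 = minB π hπ V :=
        congrArg (minB π hπ) (Subtype.ext (blkOf_eq π hπ V.2 x.2))
      rw [hGiff x.1, hb]
    · apply Subtype.ext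
      funext x
      rfl

lemma card_Gtype :
    Fintype.card (Gtype l π hπ) = ∏ V ∈ π, (l - 1).descFactorial (V.card - 1) := by
  rw [← Fintype.card_congr (Equiv.ofBijective _ (bwdG_bijective l π hπ))]
  rw [Fintype.card_pi]
  rw [← Finset.prod_coe_sort π (fun V => (l - 1).descFactorial (V.card - 1))]
  exact Finset.prod_congr rfl (fun V _ => card_BD l π hπ V)

end CountCode
section CountCode2

variable (l : ℕ) {j n : ℕ} [NeZero l]

noncomputable def Fc (π : Finset (Finset (Fin j))) (hjn : j ≤ n) (G : Fin j → Fin l)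
    (emb : {p : ↥π × Fin l // FreeSlot l π G p} ↪ {y : Fin n // ¬ (y.val < j)}) :
    ↥π → Fin l → Fin n := fun V i =>
  if h : ∃ x, x ∈ V.1 ∧ G x = i then Fin.castLE hjn (Classical.choose h)
  else (emb ⟨(V, i), h⟩).1

lemma huniq_block (π : Finset (Finset (Fin j))) (hπ : IsPart π)
    (G : Fin j → Fin l) (hG : GtypeP l π hπ G) (V : ↥π) (x y : Fin j) (hx : x ∈ V.1) (hy : y ∈ V.1) (hGxy : G x = G y) :
    x = y :=
  hG.1 x y (by rw [blkOf_eq π hπ V.2 hx, blkOf_eq π hπ V.2 hy]) hGxy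

lemma Fc_filled (π : Finset (Finset (Fin j))) (hπ : IsPart π) (hjn : j ≤ n)
    (G : Fin j → Fin l) (hG : GtypeP l π hπ G)
    (emb : {p : ↥π × Fin l // FreeSlot l π G p} ↪ {y : Fin n // ¬ (y.val < j)}) (V : ↥π) (i : Fin l) (x : Fin j) (hx : x ∈ V.1) (hGx : G x = i) :
    Fc l π hjn G emb V i = Fin.castLE hjn x := by
  have h : ∃ x, x ∈ V.1 ∧ G x = i := ⟨x, hx, hGx⟩
  rw [Fc, dif_pos h]
  obtain ⟨hc, hc'⟩ := Classical.choose_spec h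
  congr 1
  exact huniq_block l π hπ G hG V _ x hc hx (by rw [hc', hGx])

lemma Fc_free (π : Finset (Finset (Fin j))) (hjn : j ≤ n)
    (G : Fin j → Fin l)
    (emb : {p : ↥π × Fin l // FreeSlot l π G p} ↪ {y : Fin n // ¬ (y.val < j)}) (V : ↥π) (i : Fin l) (h : FreeSlot l π G (V, i)) :
    Fc l π hjn G emb V i = (emb ⟨(V, i), h⟩).1 := by
  rw [Fc, dif_neg h]

lemma Fc_eq_iota (π : Finset (Finset (Fin j))) (hπ : IsPart π) (hjn : j ≤ n)
    (G : Fin j → Fin l) (hG : GtypeP l π hπ G)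
    (emb : {p : ↥π × Fin l // FreeSlot l π G p} ↪ {y : Fin n // ¬ (y.val < j)}) (V : ↥π) (i : Fin l) (x : Fin j) :
    Fc l π hjn G emb V i = Fin.castLE hjn x ↔ (x ∈ V.1 ∧ G x = i) := by
  constructor
  · intro hFx
    by_cases h : ∃ x, x ∈ V.1 ∧ G x = i
    · obtain ⟨hc, hc'⟩ := Classical.choose_spec h
      have : Classical.choose h = x := Fin.castLE_injective hjn (by rw [← hFx, Fc, dif_pos h])
      rw [← this]
      exact ⟨hc, hc'⟩
    · exfalso
      have h2 := (emb ⟨(V, i), h⟩).2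
      rw [← Fc_free l π hjn G emb V i h, hFx] at h2
      exact h2 x.isLt
  · rintro ⟨hx, hGx⟩
    exact Fc_filled l π hπ hjn G hG emb V i x hx hGx

lemma Fc_codeP (π : Finset (Finset (Fin j))) (hπ : IsPart π) (hjn : j ≤ n)
    (G : Fin j → Fin l) (hG : GtypeP l π hπ G)
    (emb : {p : ↥π × Fin l // FreeSlot l π G p} ↪ {y : Fin n // ¬ (y.val < j)}) : CodeP l π hπ hjn (Fc l π hjn G emb) := by
  refine ⟨?_, ?_, ?_, ?_⟩
  · rintro ⟨V, i⟩ ⟨V', i'⟩ hFF0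
    have hFF : Fc l π hjn G emb V i = Fc l π hjn G emb V' i' := hFF0
    by_cases hlt : (Fc l π hjn G emb V i).val < j
    · set x : Fin j := ⟨(Fc l π hjn G emb V i).val, hlt⟩ with hx
      have he1 : Fc l π hjn G emb V i = Fin.castLE hjn x := by apply Fin.ext; rfl
      have he2 : Fc l π hjn G emb V' i' = Fin.castLE hjn x := by rw [← hFF, he1]
      obtain ⟨ha1, ha2⟩ := (Fc_eq_iota l π hπ hjn G hG emb V i x).mp he1
      obtain ⟨hb1, hb2⟩ := (Fc_eq_iota l π hπ hjn G hG emb V' i' x).mp he2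
      have hVV : V = V' := by
        apply Subtype.ext
        rw [← blkOf_eq π hπ V.2 ha1, blkOf_eq π hπ V'.2 hb1]
      have hii : i = i' := by rw [← ha2, hb2]
      rw [hVV, hii]
    · have hfree1 : FreeSlot l π G (V, i) := by
        intro hfill
        obtain ⟨x, hx, hGx⟩ := hfill
        rw [Fc_filled l π hπ hjn G hG emb V i x hx hGx] at hlt
        exact hlt x.isLt
      have hlt' : ¬ (Fc l π hjn G emb V' i').val < j := by rw [← hFF]; exact hlt
      have hfree2 : FreeSlot l π G (V', i') := by
        intro hfill
        obtain ⟨x, hx, hGx⟩ := hfill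
        rw [Fc_filled l π hπ hjn G hG emb V' i' x hx hGx] at hlt'
        exact hlt' x.isLt
      rw [Fc_free l π hjn G emb V i hfree1,
        Fc_free l π hjn G emb V' i' hfree2] at hFF
      have := emb.injective (Subtype.ext hFF)
      exact congrArg Subtype.val this
  · intro V
    apply Fc_filled l π hπ hjn G hG emb V 0 (minB π hπ V) (minB_mem π hπ V)
    rw [hG.2 (minB π hπ V)]
    show minB π hπ V = bmin π hπ (minB π hπ V)
    unfold bmin
    congr 1
    apply Subtype.ext
    exact (blkOf_eq π hπ V.2 (minB_mem π hπ V)).symm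
  · intro V i x hx
    exact ((Fc_eq_iota l π hπ hjn G hG emb V i x).mp hx).1
  · intro V x hx
    exact ⟨G x, Fc_filled l π hπ hjn G hG emb V (G x) x hx rfl⟩

end CountCode2

section CountCode3

variable (l : ℕ) {j n : ℕ} [NeZero l]
variable (π : Finset (Finset (Fin j))) (hπ : IsPart π) (hjn : j ≤ n)

noncomputable def bwdC
    (s : Σ G : Gtype l π hπ,
      ({p : ↥π × Fin l // FreeSlot l π G.1 p} ↪ {y : Fin n // ¬ (y.val < j)})) :
    Code l π hπ hjn :=
  ⟨Fc l π hjn s.1.1 s.2, Fc_codeP l π hπ hjn s.1.1 s.1.2 s.2⟩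

lemma bwdC_injective : Function.Injective (bwdC l π hπ hjn) := by
  rintro ⟨G1, emb⟩ ⟨G2, emb'⟩ h
  have hF : Fc l π hjn G1.1 emb = Fc l π hjn G2.1 emb' := congrArg Subtype.val h
  have hGG : G1 = G2 := by
    apply Subtype.ext
    funext x
    set V : ↥π := ⟨blkOf π hπ x, blkOf_mem π hπ x⟩ with hV
    have h1 : Fc l π hjn G1.1 emb V (G1.1 x) = Fin.castLE hjn x :=
      Fc_filled l π hπ hjn G1.1 G1.2 emb V (G1.1 x) x (mem_blkOf π hπ x) rfl
    have h2 : Fc l π hjn G2.1 emb' V (G1.1 x) = Fin.castLE hjn x := by rw [← hF]; exact h1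
    exact ((Fc_eq_iota l π hπ hjn G2.1 G2.2 emb' V (G1.1 x) x).mp h2).2.symm
  subst hGG
  have hemb : emb = emb' := by
    apply DFunLike.ext
    rintro ⟨⟨V, i⟩, hfree⟩
    apply Subtype.ext
    rw [← Fc_free l π hjn G1.1 emb V i hfree, ← Fc_free l π hjn G1.1 emb' V i hfree, hF]
  subst hemb
  rfl

lemma bwdC_surjective : Function.Surjective (bwdC l π hπ hjn) := by
  rintro ⟨F, hFinj, hFzero, hFcover, hFmem⟩
  set ι : Fin j → Fin n := Fin.castLE hjn with hidef
  have hGex : ∀ x : Fin j, ∃ i, F ⟨blkOf π hπ x, blkOf_mem π hπ x⟩ i = ι x :=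
    fun x => hFmem ⟨blkOf π hπ x, blkOf_mem π hπ x⟩ x (mem_blkOf π hπ x)
  set G : Fin j → Fin l := fun x => Classical.choose (hGex x) with hGdef
  have hGval : ∀ x, F ⟨blkOf π hπ x, blkOf_mem π hπ x⟩ (G x) = ι x :=
    fun x => Classical.choose_spec (hGex x)
  have hval : ∀ (V : ↥π) (x : Fin j), x ∈ V.1 → F V (G x) = ι x := by
    intro V x hx
    have hb : (⟨blkOf π hπ x, blkOf_mem π hπ x⟩ : ↥π) = V :=
      Subtype.ext (blkOf_eq π hπ V.2 hx)
    rw [← hb]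
    exact hGval x
  have hGP : GtypeP l π hπ G := by
    constructor
    · intro x y hbl hGxy
      have h1 := hGval x
      have h2 := hGval y
      have hb : (⟨blkOf π hπ x, blkOf_mem π hπ x⟩ : ↥π) = ⟨blkOf π hπ y, blkOf_mem π hπ y⟩ :=
        Subtype.ext hbl
      rw [hb, hGxy] at h1
      have : ι x = ι y := by rw [← h1, ← h2]
      exact Fin.castLE_injective hjn this
    · intro x
      constructor
      · intro h0
        have h1 := hGval x
        rw [h0] at h1
        have h2 := hFzero ⟨blkOf π hπ x, blkOf_mem π hπ x⟩
        have : ι x = ι (minB π hπ ⟨blkOf π hπ x, blkOf_mem π hπ x⟩) := by rw [← h1, ← h2]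
        exact Fin.castLE_injective hjn this
      · intro hx
        have h2 := hFzero ⟨blkOf π hπ x, blkOf_mem π hπ x⟩
        have h3 : F ⟨blkOf π hπ x, blkOf_mem π hπ x⟩ 0 = ι x := by
          rw [h2]
          show ι (bmin π hπ x) = ι x
          rw [← hx]
        have h1 := hGval x
        have := hFinj (a₁ := (⟨blkOf π hπ x, blkOf_mem π hπ x⟩, G x))
          (a₂ := (⟨blkOf π hπ x, blkOf_mem π hπ x⟩, 0)) (by
            show F _ (G x) = F _ 0
            rw [h1, h3])
        exact congrArg Prod.snd this
  have hembval : ∀ p : ↥π × Fin l, FreeSlot l π G p → ¬ (F p.1 p.2).val < j := by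
    rintro ⟨V, i⟩ hfree hlt
    set x : Fin j := ⟨(F V i).val, hlt⟩ with hx
    have he : F V i = ι x := by apply Fin.ext; rfl
    have hxV : x ∈ V.1 := hFcover V i x he
    have hGx : G x = i := by
      have h1 := hval V x hxV
      have := hFinj (a₁ := (V, G x)) (a₂ := (V, i)) (by
        show F V (G x) = F V i
        rw [h1, he])
      exact congrArg Prod.snd this
    exact hfree ⟨x, hxV, hGx⟩
  refine ⟨⟨⟨G, hGP⟩, ⟨fun p => ⟨F p.1.1 p.1.2, hembval p.1 p.2⟩, ?_⟩⟩, ?_⟩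
  · rintro ⟨⟨V, i⟩, hf⟩ ⟨⟨V', i'⟩, hf'⟩ hpe
    have : F V i = F V' i' := congrArg Subtype.val hpe
    apply Subtype.ext
    exact hFinj (a₁ := (V, i)) (a₂ := (V', i')) this
  · apply Subtype.ext
    show Fc l π hjn G _ = F
    funext V i
    by_cases h : ∃ x, x ∈ V.1 ∧ G x = i
    · obtain ⟨x, hxV, hGx⟩ := h
      rw [Fc_filled l π hπ hjn G hGP _ V i x hxV hGx, ← hGx, hval V x hxV]
    · rw [Fc_free l π hjn G _ V i h]
      rfl

lemma card_Code :
    Fintype.card (Code l π hπ hjn)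
      = (∏ V ∈ π, (l - 1).descFactorial (V.card - 1))
          * (n - j).descFactorial (l * π.card - j) := by
  rw [← Fintype.card_congr (Equiv.ofBijective _
    ⟨bwdC_injective l π hπ hjn, bwdC_surjective l π hπ hjn⟩)]
  rw [Fintype.card_sigma]
  have hRest : Fintype.card {y : Fin n // ¬ (y.val < j)} = n - j := by
    have h1 : Fintype.card {y : Fin n // ¬ (y.val < j)}
        = Fintype.card (Fin n) - Fintype.card {y : Fin n // y.val < j} :=
      Fintype.card_subtype_compl _
    have h2 : Fintype.card {y : Fin n // y.val < j} = j := by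
      rw [Fintype.card_congr (⟨fun y => (⟨y.1.val, y.2⟩ : Fin j),
        fun x => ⟨Fin.castLE hjn x, x.isLt⟩,
        fun y => by apply Subtype.ext; apply Fin.ext; rfl,
        fun x => by apply Fin.ext; rfl⟩ : {y : Fin n // y.val < j} ≃ Fin j)]
      exact Fintype.card_fin j
    rw [h1, h2, Fintype.card_fin]
  have hFS : ∀ Gg : Gtype l π hπ,
      Fintype.card {p : ↥π × Fin l // FreeSlot l π Gg.1 p} = l * π.card - j := by
    intro Gg
    have hcongr : Fintype.card {p : ↥π × Fin l // FreeSlot l π Gg.1 p}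
        = Fintype.card {p : ↥π × Fin l // ¬ ∃ x, x ∈ p.1.1 ∧ Gg.1 x = p.2} :=
      Fintype.card_congr (Equiv.subtypeEquivRight (fun p => Iff.rfl))
    have h1 : Fintype.card {p : ↥π × Fin l // ¬ ∃ x, x ∈ p.1.1 ∧ Gg.1 x = p.2}
        = Fintype.card (↥π × Fin l)
          - Fintype.card {p : ↥π × Fin l // ∃ x, x ∈ p.1.1 ∧ Gg.1 x = p.2} :=
      Fintype.card_subtype_compl _
    have h2 : Fintype.card {p : ↥π × Fin l // ∃ x, x ∈ p.1.1 ∧ Gg.1 x = p.2} = j := by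
      rw [← Fintype.card_congr (Equiv.ofBijective
        (fun x : Fin j => (⟨(⟨blkOf π hπ x, blkOf_mem π hπ x⟩, Gg.1 x),
          ⟨x, mem_blkOf π hπ x, rfl⟩⟩ : {p : ↥π × Fin l // ∃ x, x ∈ p.1.1 ∧ Gg.1 x = p.2}))
        ⟨by
          intro x y hxy
          have h3 := congrArg Subtype.val hxy
          have hbl : blkOf π hπ x = blkOf π hπ y :=
            congrArg Subtype.val (congrArg Prod.fst h3)
          exact Gg.2.1 x y hbl (congrArg Prod.snd h3), by
          rintro ⟨⟨V, i⟩, x, hxV, hGx⟩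
          refine ⟨x, Subtype.ext ?_⟩
          have hb : (⟨blkOf π hπ x, blkOf_mem π hπ x⟩ : ↥π) = V :=
            Subtype.ext (blkOf_eq π hπ V.2 hxV)
          rw [Prod.ext_iff]
          exact ⟨hb, hGx⟩⟩)]
      exact Fintype.card_fin j
    rw [hcongr, h1, h2, Fintype.card_prod, Fintype.card_coe, Fintype.card_fin, Nat.mul_comm]
  have hsum : ∀ Gg : Gtype l π hπ,
      Fintype.card ({p : ↥π × Fin l // FreeSlot l π Gg.1 p} ↪ {y : Fin n // ¬ (y.val < j)})
        = (n - j).descFactorial (l * π.card - j) := by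
    intro Gg
    rw [Fintype.card_embedding_eq, hRest, hFS]
  rw [Finset.sum_congr rfl (fun Gg _ => hsum Gg), Finset.sum_const, Finset.card_univ,
    smul_eq_mul, card_Gtype]

end CountCode3
section Helpers

lemma descFactorial_cast_real (m k : ℕ) (h : k ≤ m) :
    (m.descFactorial k : ℝ) = (m.factorial : ℝ) / ((m - k).factorial : ℝ) := by
  have h1 := Nat.factorial_mul_descFactorial h
  have h2 : ((m - k).factorial : ℝ) ≠ 0 := Nat.cast_ne_zero.mpr (Nat.factorial_ne_zero _)
  field_simp
  have := congrArg (fun x : ℕ => (x : ℝ)) h1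
  push_cast at this
  linarith [this]

lemma sum_card_part {j : ℕ} (π : Finset (Finset (Fin j))) (hπ : IsPart π) :
    ∑ V ∈ π, V.card = j := by
  have hdisj : ∀ V ∈ π, ∀ W ∈ π, V ≠ W → Disjoint V W := by
    intro V hV W hW hVW
    rw [Finset.disjoint_left]
    intro x hxV hxW
    obtain ⟨U, _, hU⟩ := hπ.2 x
    exact hVW ((hU V ⟨hV, hxV⟩).trans (hU W ⟨hW, hxW⟩).symm)
  have hcover : π.biUnion id = Finset.univ := by
    ext x
    simp only [Finset.mem_biUnion, id, Finset.mem_univ, iff_true]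
    obtain ⟨V, ⟨hV, hxV⟩, _⟩ := hπ.2 x
    exact ⟨V, hV, hxV⟩
  have h1 := Finset.card_biUnion hdisj
  rw [show (π.biUnion fun x => x) = π.biUnion id from rfl, hcover, Finset.card_univ,
    Fintype.card_fin] at h1
  exact h1.symm

lemma card_part_le {j : ℕ} (π : Finset (Finset (Fin j))) (hπ : IsPart π) : π.card ≤ j := by
  have h1 := sum_card_part π hπ
  calc π.card = ∑ _V ∈ π, 1 := by simp
    _ ≤ ∑ V ∈ π, V.card := by
        apply Finset.sum_le_sum
        intro V hV
        exact Finset.card_pos.mpr (hπ.1 V hV)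
    _ = j := h1

end Helpers
section EmptyCase

variable (A : Finset ℕ) (l : ℕ) {j n : ℕ} [NeZero l]
variable (π : Finset (Finset (Fin j))) (hπ : IsPart π) (hjn : j ≤ n)

lemma card_Pfull_zero (V0 : Finset (Fin j)) (hV0 : V0 ∈ π) (hbig : l < V0.card) :
    Nat.card {σ : Equiv.Perm (Fin n) // Pfull A l π hπ hjn σ} = 0 := by
  have hl0 : 0 < l := Nat.pos_of_ne_zero (NeZero.ne l)
  haveI : IsEmpty {σ : Equiv.Perm (Fin n) // Pfull A l π hπ hjn σ} := by
    constructor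
    rintro ⟨σ, hA, hL, hQ⟩
    set ι : Fin j → Fin n := Fin.castLE hjn with hidef
    obtain ⟨x0, hx0⟩ := hπ.1 V0 hV0
    have hqx0 : qcl ι σ x0 = V0 := by rw [hQ x0]; exact blkOf_eq π hπ hV0 hx0
    have hsub : V0.image ι ⊆ (Finset.range l).image (fun m => (⇑σ)^[m] (ι x0)) := by
      intro y hy
      rw [Finset.mem_image] at hy
      obtain ⟨z, hz, rfl⟩ := hy
      have hz2 : z ∈ qcl ι σ x0 := by rw [hqx0]; exact hz
      rw [mem_qcl_iff] at hz2
      rw [sameCycle_iff_exists_nat] at hz2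
      obtain ⟨m, hm⟩ := hz2
      rw [Finset.mem_image]
      refine ⟨m % l, Finset.mem_range.mpr (Nat.mod_lt m hl0), ?_⟩
      have h4 := Function.iterate_mod_minimalPeriod_eq (f := ⇑σ) (x := ι x0) (n := m)
      rw [hL x0] at h4
      rw [h4, hm]
    have hcard1 : (V0.image ι).card = V0.card :=
      Finset.card_image_of_injective V0 (Fin.castLE_injective hjn)
    have hcard2 := Finset.card_le_card hsub
    have hcard3 := Finset.card_image_le (s := Finset.range l)
      (f := fun m => (⇑σ)^[m] (ι x0))
    rw [Finset.card_range] at hcard3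
    omega
  exact Nat.card_of_isEmpty

lemma fiber_card_eq (hlA : l ∈ (A : Set ℕ)) :
    Nat.card {σ : Equiv.Perm (Fin n) // Pfull A l π hπ hjn σ}
      = if ∀ V ∈ π, V.card ≤ l then
          (∏ V ∈ π, (l - 1).descFactorial (V.card - 1))
            * (n - j).descFactorial (l * π.card - j) * permCount ↑A (n - l * π.card)
        else 0 := by
  by_cases hc : ∀ V ∈ π, V.card ≤ l
  · rw [if_pos hc, card_Pfull A l π hπ hjn hlA, card_Code l π hπ hjn, Nat.mul_assoc]
  · rw [if_neg hc]
    push_neg at hc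
    obtain ⟨V0, hV0, hbig⟩ := hc
    exact card_Pfull_zero A l π hπ hjn V0 hV0 hbig

end EmptyCase
theorem stmt_17 (A : Finset ℕ) (hApos : ∀ a ∈ A, 0 < a) (hA : A.Nonempty)
    (d : ℕ) (hd : d = A.max' hA) (l : ℕ) (hl : l ∈ A) (j : ℕ) (hj : 0 < j)
    (n : ℕ) (hn : permCount ↑A n ≠ 0) (hnj : l * j ≤ n) :
    (Nat.card {s : Equiv.Perm (Fin n) //
        (∀ x, Function.minimalPeriod ⇑s x ∈ (A : Set ℕ)) ∧
        ∀ m : Fin n, (m : ℕ) < j → Function.minimalPeriod ⇑s m = l} : ℝ)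
      / (permCount ↑A n : ℝ)
    = ∑ π ∈ Finset.univ.filter (fun π : Finset (Finset (Fin j)) =>
        (∀ V ∈ π, V.Nonempty) ∧ ∀ x : Fin j, ∃! V, V ∈ π ∧ x ∈ V),
        (1 / (n.descFactorial j : ℝ)) *
          (((permCount ↑A (n - l * π.card) : ℝ) / (n - l * π.card).factorial) /
            ((permCount ↑A n : ℝ) / n.factorial)) *
          ∏ V ∈ π,
            (if V.card ≤ l then ((l - 1).factorial : ℝ) / ((l - V.card).factorial : ℝ)
             else 0) := by
  have hl0 : 0 < l := hApos l hl
  haveI : NeZero l := ⟨hl0.ne'⟩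
  have hjn : j ≤ n := le_trans (Nat.le_mul_of_pos_left j hl0) hnj
  have hlA : l ∈ (↑A : Set ℕ) := by simpa using hl
  have hnum : (Nat.card {s : Equiv.Perm (Fin n) //
        (∀ x, Function.minimalPeriod ⇑s x ∈ (A : Set ℕ)) ∧
        ∀ m : Fin n, (m : ℕ) < j → Function.minimalPeriod ⇑s m = l})
      = ∑ π ∈ Finset.univ.filter (fun π : Finset (Finset (Fin j)) =>
          (∀ V ∈ π, V.Nonempty) ∧ ∀ x : Fin j, ∃! V, V ∈ π ∧ x ∈ V),
          (if ∀ V ∈ π, V.card ≤ l then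
            (∏ V ∈ π, (l - 1).descFactorial (V.card - 1))
              * (n - j).descFactorial (l * π.card - j) * permCount ↑A (n - l * π.card)
          else 0) := by
    rw [Nat.card_eq_fintype_card, Fintype.card_subtype]
    rw [Finset.card_eq_sum_card_fiberwise
      (f := fun σ => Finset.univ.image (qcl (Fin.castLE hjn) σ))
      (t := Finset.univ.filter (fun π : Finset (Finset (Fin j)) =>
        (∀ V ∈ π, V.Nonempty) ∧ ∀ x : Fin j, ∃! V, V ∈ π ∧ x ∈ V))
      (fun σ _ => Finset.mem_filter.mpr
        ⟨Finset.mem_univ _, isPart_image_qcl (Fin.castLE hjn) σ⟩)]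
    apply Finset.sum_congr rfl
    intro π hπmem
    have hπ : IsPart π := (Finset.mem_filter.mp hπmem).2
    rw [← fiber_card_eq A l π hπ hjn hlA]
    rw [Nat.card_eq_fintype_card, Fintype.card_subtype]
    rw [Finset.filter_filter]
    congr 1
    apply Finset.filter_congr
    intro σ _
    constructor
    · rintro ⟨⟨hA', hL'⟩, hImg⟩
      refine ⟨hA', fun x => hL' (Fin.castLE hjn x) x.isLt, ?_⟩
      exact (image_qcl_eq_iff (Fin.castLE hjn) σ π hπ).mp hImg
    · rintro ⟨hA', hL', hQ'⟩
      refine ⟨⟨hA', fun m hm => ?_⟩, ?_⟩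
      · have h1 := hL' ⟨m.val, hm⟩
        have h2 : Fin.castLE hjn (⟨m.val, hm⟩ : Fin j) = m := by apply Fin.ext; rfl
        rwa [h2] at h1
      · exact (image_qcl_eq_iff (Fin.castLE hjn) σ π hπ).mpr hQ'
  rw [hnum]
  push_cast
  rw [Finset.sum_div]
  apply Finset.sum_congr rfl
  intro π hπmem
  have hπ : IsPart π := (Finset.mem_filter.mp hπmem).2
  by_cases hc : ∀ V ∈ π, V.card ≤ l
  · rw [if_pos hc]
    have hkj : π.card ≤ j := card_part_le π hπ
    have hlkn : l * π.card ≤ n := le_trans (Nat.mul_le_mul_left l hkj) hnj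
    have hjlk : j ≤ l * π.card := by
      have hsum := sum_card_part π hπ
      have hle : ∑ V ∈ π, V.card ≤ l * π.card := by
        calc ∑ V ∈ π, V.card ≤ ∑ _V ∈ π, l := Finset.sum_le_sum hc
          _ = π.card * l := by rw [Finset.sum_const, smul_eq_mul]
          _ = l * π.card := Nat.mul_comm _ _
      omega
    have hb : (permCount ↑A n : ℝ) ≠ 0 := Nat.cast_ne_zero.mpr hn
    have hF1 : ((n.factorial : ℕ) : ℝ) ≠ 0 := Nat.cast_ne_zero.mpr (Nat.factorial_ne_zero _)
    have hF2 : (((n - j).factorial : ℕ) : ℝ) ≠ 0 := Nat.cast_ne_zero.mpr (Nat.factorial_ne_zero _)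
    have hF3 : (((n - l * π.card).factorial : ℕ) : ℝ) ≠ 0 :=
      Nat.cast_ne_zero.mpr (Nat.factorial_ne_zero _)
    have hprod : (∏ V ∈ π, (if V.card ≤ l then
          ((l - 1).factorial : ℝ) / ((l - V.card).factorial : ℝ) else 0))
        = ∏ V ∈ π, ((l - 1).factorial : ℝ) / ((l - V.card).factorial : ℝ) :=
      Finset.prod_congr rfl (fun V hV => if_pos (hc V hV))
    have hcastprod : (∏ V ∈ π, ((l - 1).descFactorial (V.card - 1) : ℝ))
        = ∏ V ∈ π, ((l - 1).factorial : ℝ) / ((l - V.card).factorial : ℝ) := by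
      apply Finset.prod_congr rfl
      intro V hV
      have hV1 : 0 < V.card := Finset.card_pos.mpr (hπ.1 V hV)
      have h1 : V.card - 1 ≤ l - 1 := by have := hc V hV; omega
      rw [descFactorial_cast_real _ _ h1]
      rw [show l - 1 - (V.card - 1) = l - V.card from by omega]
    have hdf2 : (((n - j).descFactorial (l * π.card - j) : ℕ) : ℝ)
        = ((n - j).factorial : ℝ) / ((n - l * π.card).factorial : ℝ) := by
      rw [descFactorial_cast_real _ _ (by omega)]
      rw [show n - j - (l * π.card - j) = n - l * π.card from by omega]
    have hdf1 : ((n.descFactorial j : ℕ) : ℝ) = (n.factorial : ℝ) / ((n - j).factorial : ℝ) :=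
      descFactorial_cast_real n j hjn
    rw [hprod, hcastprod, hdf2, hdf1]
    field_simp
  · rw [if_neg hc]
    push_neg at hc
    obtain ⟨V0, hV0, hbig⟩ := hc
    have hz : (∏ V ∈ π, (if V.card ≤ l then
          ((l - 1).factorial : ℝ) / ((l - V.card).factorial : ℝ) else 0)) = 0 :=
      Finset.prod_eq_zero hV0 (by rw [if_neg (not_le.mpr hbig)])
    rw [hz, mul_zero, zero_div]
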